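/- Let u, a, b be positive integers with u ≤ min(a-1, b). Suppose integers c_{pq}, d_{pq} ∈ [1,a] (for 1 ≤ p ≤ u, 1 ≤ q ≤ b) satisfy d_{pq} ≥ c_{pq}, c_{pq} ≥ d_{p,q+1} (for q < b), and c_{pq} > d_{p-1,q} (for p > 1). Then the sum over all p, q of (d_{pq} - c_{pq}) is at most (a-u)·u, with equality if and only if for all p, q: c_{pq} = d_{p,q+1} (for q < b), d_{p1} = a-u+p, and c_{pb} = p. -/

import Mathlib

lemma tele (f g : ℤ → ℤ) (b : ℤ) (hb : 1 ≤ b) :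
    (∑ q ∈ Finset.Icc 1 b, (g q - f q)) =
      g 1 - f b + ∑ q ∈ Finset.Icc 1 (b - 1), (g (q + 1) - f q) := by
  refine Int.le_induction (motive := fun b _ => (∑ q ∈ Finset.Icc 1 b, (g q - f q)) =
      g 1 - f b + ∑ q ∈ Finset.Icc 1 (b - 1), (g (q + 1) - f q)) ?_ ?_ b hb
  · norm_num
  · intro b hb ih
    have e1 : Finset.Icc (1:ℤ) (b+1) = insert (b+1) (Finset.Icc 1 b) := by
      ext x; simp [Finset.mem_Icc]; omega
    have e2 : Finset.Icc (1:ℤ) (b+1-1) = insert b (Finset.Icc 1 (b-1)) := by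
      ext x; simp [Finset.mem_Icc]; omega
    have n1 : (b+1) ∉ Finset.Icc (1:ℤ) b := by simp [Finset.mem_Icc]
    have n2 : b ∉ Finset.Icc (1:ℤ) (b-1) := by simp [Finset.mem_Icc]
    rw [e1, Finset.sum_insert n1, ih, e2, Finset.sum_insert n2]
    ring

lemma lower (f : ℤ → ℤ) (u : ℤ) (h1 : 1 ≤ f 1)
    (hstep : ∀ p, 2 ≤ p → p ≤ u → f (p - 1) < f p) :
    ∀ p, 1 ≤ p → p ≤ u → p ≤ f p := by
  intro p hp
  refine Int.le_induction (motive := fun p _ => p ≤ u → p ≤ f p) ?_ ?_ p hp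
  · intro _; exact h1
  · intro p hp ih hpu
    have h4 := hstep (p+1) (by omega) hpu
    have h5 := ih (by omega)
    simp only [add_sub_cancel_right] at h4
    omega

lemma upper (f : ℤ → ℤ) (u a : ℤ) (hu : 1 ≤ u) (hfu : f u ≤ a)
    (hstep : ∀ p, 2 ≤ p → p ≤ u → f (p - 1) < f p) :
    ∀ p, 1 ≤ p → p ≤ u → f p ≤ a - u + p := by
  have key : ∀ k : ℕ, ∀ p, 1 ≤ p → p ≤ u → u - p = k → f p ≤ a - u + p := by
    intro k
    induction k with
    | zero =>
      intro p h1 h2 h3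
      have hpu : p = u := by omega
      rw [hpu]; omega
    | succ k ih =>
      intro p h1 h2 h3
      have h4 := ih (p+1) (by omega) (by omega) (by omega)
      have h5 := hstep (p+1) (by omega) (by omega)
      simp only [add_sub_cancel_right] at h5
      omega
  intro p h1 h2
  exact key (u - p).toNat p h1 h2 (by omega)

theorem stmt2 (u a b : ℤ) (hu : 0 < u) (ha : 0 < a) (hb : 0 < b)
    (hua : u ≤ a - 1) (hub : u ≤ b)
    (c d : ℤ → ℤ → ℤ)
    (hrange : ∀ p ∈ Finset.Icc 1 u, ∀ q ∈ Finset.Icc 1 b,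
      c p q ∈ Finset.Icc 1 a ∧ d p q ∈ Finset.Icc 1 a)
    (h1 : ∀ p ∈ Finset.Icc 1 u, ∀ q ∈ Finset.Icc 1 b, c p q ≤ d p q)
    (h2 : ∀ p ∈ Finset.Icc 1 u, ∀ q ∈ Finset.Icc 1 (b - 1), d p (q + 1) ≤ c p q)
    (h3 : ∀ p ∈ Finset.Icc 2 u, ∀ q ∈ Finset.Icc 1 b, d (p - 1) q < c p q) :
    (∑ p ∈ Finset.Icc 1 u, ∑ q ∈ Finset.Icc 1 b, (d p q - c p q)) ≤ (a - u) * u ∧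
    ((∑ p ∈ Finset.Icc 1 u, ∑ q ∈ Finset.Icc 1 b, (d p q - c p q)) = (a - u) * u ↔
      (∀ p ∈ Finset.Icc 1 u, ∀ q ∈ Finset.Icc 1 (b - 1), c p q = d p (q + 1)) ∧
      (∀ p ∈ Finset.Icc 1 u, d p 1 = a - u + p) ∧
      (∀ p ∈ Finset.Icc 1 u, c p b = p)) := by
  have hb1 : (1:ℤ) ∈ Finset.Icc 1 b := by simp [Finset.mem_Icc]; omega
  have hbb : b ∈ Finset.Icc 1 b := by simp [Finset.mem_Icc]; omega
  -- S p = g p - T p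
  have hSgT : ∀ p ∈ Finset.Icc 1 u,
      (∑ q ∈ Finset.Icc 1 b, (d p q - c p q)) = (d p 1 - c p b) -
        ∑ q ∈ Finset.Icc 1 (b - 1), (c p q - d p (q + 1)) := by
    intro p hp
    rw [tele (fun q => c p q) (fun q => d p q) b (by omega)]
    rw [Finset.sum_sub_distrib, Finset.sum_sub_distrib]
    ring
  have hT0 : ∀ p ∈ Finset.Icc 1 u,
      0 ≤ ∑ q ∈ Finset.Icc 1 (b - 1), (c p q - d p (q + 1)) := by
    intro p hp
    apply Finset.sum_nonneg
    intro q hq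
    have := h2 p hp q hq
    omega
  -- c p b ≥ p
  have hcb : ∀ p ∈ Finset.Icc 1 u, p ≤ c p b := by
    intro p hp
    simp only [Finset.mem_Icc] at hp
    refine lower (fun p => c p b) u ?_ ?_ p hp.1 hp.2
    · show (1:ℤ) ≤ c 1 b
      have := (hrange 1 (by simp [Finset.mem_Icc]; omega) b hbb).1
      simp [Finset.mem_Icc] at this; omega
    · intro r h2r hru
      show c (r - 1) b < c r b
      have hd := h3 r (by simp [Finset.mem_Icc]; omega) b hbb
      have hc := h1 (r-1) (by simp [Finset.mem_Icc]; omega) b hbb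
      omega
  -- d p 1 ≤ a - u + p
  have hd1 : ∀ p ∈ Finset.Icc 1 u, d p 1 ≤ a - u + p := by
    intro p hp
    simp only [Finset.mem_Icc] at hp
    refine upper (fun p => d p 1) u a (by omega) ?_ ?_ p hp.1 hp.2
    · show d u 1 ≤ a
      have := (hrange u (by simp [Finset.mem_Icc]; omega) 1 hb1).2
      simp [Finset.mem_Icc] at this; omega
    · intro r h2r hru
      show d (r - 1) 1 < d r 1
      have hd := h3 r (by simp [Finset.mem_Icc]; omega) 1 hb1
      have hc := h1 r (by simp [Finset.mem_Icc]; omega) 1 hb1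
      omega
  have hga : ∀ p ∈ Finset.Icc 1 u, d p 1 - c p b ≤ a - u := by
    intro p hp
    have := hcb p hp
    have := hd1 p hp
    omega
  have hSg : ∀ p ∈ Finset.Icc 1 u,
      (∑ q ∈ Finset.Icc 1 b, (d p q - c p q)) ≤ d p 1 - c p b := by
    intro p hp
    have := hSgT p hp
    have := hT0 p hp
    omega
  have hconst : (∑ _p ∈ Finset.Icc (1:ℤ) u, (a - u)) = (a - u) * u := by
    rw [Finset.sum_const, Int.card_Icc, nsmul_eq_mul]
    have h : ((u + 1 - 1 : ℤ).toNat : ℤ) = u := by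
      rw [show (u + 1 - 1 : ℤ) = u by ring, Int.toNat_of_nonneg hu.le]
    rw [h]; ring
  have hsum1 : (∑ p ∈ Finset.Icc 1 u, ∑ q ∈ Finset.Icc 1 b, (d p q - c p q)) ≤
      ∑ p ∈ Finset.Icc 1 u, (d p 1 - c p b) := Finset.sum_le_sum hSg
  have hsum2 : (∑ p ∈ Finset.Icc 1 u, (d p 1 - c p b)) ≤ (a - u) * u := by
    calc (∑ p ∈ Finset.Icc 1 u, (d p 1 - c p b)) ≤ ∑ _p ∈ Finset.Icc (1:ℤ) u, (a - u) :=
          Finset.sum_le_sum hga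
      _ = (a - u) * u := hconst
  refine ⟨le_trans hsum1 hsum2, ?_, ?_⟩
  · intro heq
    have hsgeq : (∑ p ∈ Finset.Icc 1 u, ∑ q ∈ Finset.Icc 1 b, (d p q - c p q)) =
        ∑ p ∈ Finset.Icc 1 u, (d p 1 - c p b) := by omega
    have hgceq : (∑ p ∈ Finset.Icc 1 u, (d p 1 - c p b)) =
        ∑ _p ∈ Finset.Icc (1:ℤ) u, (a - u) := by rw [hconst]; omega
    have hSgp := (Finset.sum_eq_sum_iff_of_le hSg).mp hsgeq
    have hgap := (Finset.sum_eq_sum_iff_of_le hga).mp hgceq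
    refine ⟨?_, ?_, ?_⟩
    · intro p hp q hq
      have hTp : (∑ q ∈ Finset.Icc 1 (b - 1), (c p q - d p (q + 1))) = 0 := by
        have := hSgT p hp
        have := hSgp p hp
        omega
      have := (Finset.sum_eq_zero_iff_of_nonneg (by
        intro r hr; have := h2 p hp r hr; omega)).mp hTp q hq
      omega
    · intro p hp
      have h4 := hgap p hp
      have h5 := hcb p hp
      have h6 := hd1 p hp
      omega
    · intro p hp
      have h4 := hgap p hp
      have h5 := hcb p hp
      have h6 := hd1 p hp
      omega
  · rintro ⟨hc1, hc2, hc3⟩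
    have key : ∀ p ∈ Finset.Icc (1:ℤ) u,
        (∑ q ∈ Finset.Icc 1 b, (d p q - c p q)) = a - u := by
      intro p hp
      have hTp : (∑ q ∈ Finset.Icc 1 (b - 1), (c p q - d p (q + 1))) = 0 := by
        apply Finset.sum_eq_zero
        intro q hq
        have := hc1 p hp q hq
        omega
      have h4 := hSgT p hp
      have h5 := hc2 p hp
      have h6 := hc3 p hp
      omega
    calc (∑ p ∈ Finset.Icc 1 u, ∑ q ∈ Finset.Icc 1 b, (d p q - c p q)) =
          ∑ _p ∈ Finset.Icc (1:ℤ) u, (a - u) := Finset.sum_congr rfl key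
      _ = (a - u) * u := hconst
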